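/- Let X_1, ..., X_n be i.i.d. integrable random variables with mean zero and E|X_1| = 1, and let S_k = X_1+...+X_k, S_k^{(2)} = S_1+...+S_k. Define p_k = P(max_{1≤j≤k} S_j^{(2)} < 0) and q_k = P(max_{1≤j≤k} S_j^{(2)} ≤ 0) with p_0 = q_0 = 1. Then for n > 2, ∑_{k=0}^{n-2} p_k q_{n-2-k} ≤ 2 E[A_{n-1} - B_{n-1}], where A_m = max_{1≤k≤m}(-S_{k+1}) and B_m = -max_{1≤k≤m} S_k. -/

import Mathlib

open MeasureTheory ProbabilityTheory Finset

/-- Iterated partial-sum functional `∑_{b=1}^{s} (s+1-b) v b` of a (1-indexed) sequence. -/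
def itSum (v : ℕ → ℝ) (s : ℕ) : ℝ := ∑ b ∈ Finset.range s, ((s - b : ℕ) : ℝ) * v (b + 1)

lemma itSum_congr {v w : ℕ → ℝ} {s : ℕ} (h : ∀ b, 1 ≤ b → b ≤ s → v b = w b) :
    itSum v s = itSum w s := by
  refine Finset.sum_congr rfl fun b hb => ?_
  rw [h (b + 1) (by omega) (by have := Finset.mem_range.mp hb; omega)]

lemma itSum_succ (v : ℕ → ℝ) (s : ℕ) :
    itSum v (s + 1) = itSum v s + ∑ b ∈ Finset.range (s + 1), v (b + 1) := by
  unfold itSum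
  have h1 : ∀ b ∈ Finset.range (s + 1), ((s + 1 - b : ℕ) : ℝ) * v (b + 1)
      = ((s - b : ℕ) : ℝ) * v (b + 1) + v (b + 1) := by
    intro b hb
    have hb' := Finset.mem_range.mp hb
    have : (s + 1 - b : ℕ) = (s - b) + 1 := by omega
    rw [this]
    push_cast
    ring
  rw [Finset.sum_congr rfl h1, Finset.sum_add_distrib, Finset.sum_range_succ
    (fun b => ((s - b : ℕ) : ℝ) * v (b + 1))]
  simp

/-- Abstract chain lemma: nonoverlapping intervals `[c j, c j + ℓ j)` inside `[B, A)`. -/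
lemma aux_chain (A : ℝ) (ℓ c : ℕ → ℝ) (s : Finset ℕ) :
    ∀ (B : ℝ), (∀ j ∈ s, 0 ≤ ℓ j) →
    (∀ j ∈ s, ∀ j' ∈ s, j < j' → ℓ j ≠ 0 → ℓ j' ≠ 0 → c j + ℓ j ≤ c j') →
    (∀ j ∈ s, ℓ j ≠ 0 → B ≤ c j) →
    (∀ j ∈ s, ℓ j ≠ 0 → c j + ℓ j ≤ A) →
    B ≤ A → ∑ j ∈ s, ℓ j ≤ A - B := by
  induction s using Finset.induction_on_min with
  | empty => intro B _ _ _ _ hBA; simp; linarith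
  | insert a t ha IH =>
    intro B h0 hmono hlow hhigh hBA
    have hat : a ∉ t := fun h => lt_irrefl a (ha a h)
    rw [Finset.sum_insert hat]
    by_cases hla : ℓ a = 0
    · rw [hla, zero_add]
      exact IH B (fun j hj => h0 j (Finset.mem_insert_of_mem hj))
        (fun j hj j' hj' => hmono j (Finset.mem_insert_of_mem hj) j' (Finset.mem_insert_of_mem hj'))
        (fun j hj => hlow j (Finset.mem_insert_of_mem hj))
        (fun j hj => hhigh j (Finset.mem_insert_of_mem hj)) hBA
    · have hBc : B ≤ c a := hlow a (Finset.mem_insert_self a t) hla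
      have hcA : c a + ℓ a ≤ A := hhigh a (Finset.mem_insert_self a t) hla
      have IH' : ∑ j ∈ t, ℓ j ≤ A - (c a + ℓ a) := by
        refine IH (c a + ℓ a) (fun j hj => h0 j (Finset.mem_insert_of_mem hj))
          (fun j hj j' hj' => hmono j (Finset.mem_insert_of_mem hj) j'
            (Finset.mem_insert_of_mem hj'))
          (fun j hj hlj => hmono a (Finset.mem_insert_self a t) j
            (Finset.mem_insert_of_mem hj) (ha j hj) hla hlj)
          (fun j hj => hhigh j (Finset.mem_insert_of_mem hj)) hcA
      linarith

lemma measurable_finset_sup' {Ω : Type*} [MeasurableSpace Ω] {s : Finset ℕ} (hs : s.Nonempty)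
    {f : ℕ → Ω → ℝ} (hf : ∀ i, Measurable (f i)) :
    Measurable fun ω => s.sup' hs (fun i => f i ω) := by
  induction hs using Finset.Nonempty.cons_induction with
  | singleton i => simp only [Finset.sup'_singleton]; exact hf i
  | cons i t hit ht IH =>
    simp only [Finset.sup'_cons ht]
    exact (hf i).sup IH

lemma indep_map_pi {Ω : Type*} [MeasureSpace Ω] [IsProbabilityMeasure (ℙ : Measure Ω)]
    (X : ℕ → Ω → ℝ) (hmeas : ∀ i, Measurable (X i))
    (hindep : iIndepFun X ℙ)
    (m : ℕ) (κ : Fin m → ℕ) (hκ : Function.Injective κ) :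
    Measure.map (fun ω (i : Fin m) => X (κ i) ω) ℙ
      = Measure.pi (fun i => Measure.map (X (κ i)) ℙ) := by
  symm
  refine Measure.pi_eq fun A hA => ?_
  have hΦ : Measurable (fun ω (i : Fin m) => X (κ i) ω) :=
    measurable_pi_lambda _ fun i => hmeas _
  rw [Measure.map_apply hΦ (MeasurableSet.univ_pi hA)]
  have hpre : (fun ω (i : Fin m) => X (κ i) ω) ⁻¹' (Set.univ.pi A)
      = ⋂ i : Fin m, X (κ i) ⁻¹' A i := by
    ext ω; simp [Set.mem_univ_pi]
  rw [hpre]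
  classical
  set A' : ℕ → Set ℝ := fun j => ⋂ (i : Fin m), ⋂ (_ : κ i = j), A i with hA'def
  have hA' : ∀ i, A' (κ i) = A i := by
    intro i
    refine Set.ext fun x => ⟨fun hx => ?_, fun hx => ?_⟩
    · simp only [hA'def, Set.mem_iInter] at hx
      exact hx i rfl
    · simp only [hA'def, Set.mem_iInter]
      intro i' h
      cases hκ h
      exact hx
  have hA'm : ∀ j, MeasurableSet (A' j) :=
    fun j => MeasurableSet.iInter fun i => MeasurableSet.iInter fun _ => hA i
  have hS : (⋂ i : Fin m, X (κ i) ⁻¹' A i)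
      = ⋂ j ∈ Finset.image κ Finset.univ, X j ⁻¹' A' j := by
    refine Set.ext fun ω => ⟨fun hω => ?_, fun hω => ?_⟩
    · simp only [Set.mem_iInter] at hω ⊢
      rintro j hj
      simp only [Finset.mem_image] at hj
      obtain ⟨i, -, rfl⟩ := hj
      rw [Set.mem_preimage, hA' i]
      exact hω i
    · simp only [Set.mem_iInter] at hω ⊢
      intro i
      have := hω (κ i) (Finset.mem_image_of_mem κ (Finset.mem_univ i))
      rwa [Set.mem_preimage, hA' i] at this
  rw [hS, hindep.measure_inter_preimage_eq_mul (Finset.image κ Finset.univ)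
    (fun j _ => hA'm j), Finset.prod_image (fun i _ i' _ h => hκ h)]
  refine Finset.prod_congr rfl fun i _ => ?_
  rw [hA' i, Measure.map_apply (hmeas _) (hA i)]

lemma lawQ {Ω : Type*} [MeasureSpace Ω] [IsProbabilityMeasure (ℙ : Measure Ω)]
    (X : ℕ → Ω → ℝ) (hmeas : ∀ i, Measurable (X i))
    (hindep : iIndepFun X ℙ)
    (hid : ∀ i, IdentDistrib (X i) (X 1) ℙ ℙ) (m : ℕ) (κ : ℕ → ℕ)
    (hinj : ∀ b b', 1 ≤ b → b ≤ m → 1 ≤ b' → b' ≤ m → κ b = κ b' → b = b') :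
    ℙ {ω | ∀ s ∈ Finset.Icc 1 m, itSum (fun b => X (κ b) ω) s ≤ 0}
      = ℙ {ω | ∀ s ∈ Finset.Icc 1 m, itSum (fun b => X b ω) s ≤ 0} := by
  classical
  set C : Set (Fin m → ℝ) :=
    {u | ∀ s ∈ Finset.Icc 1 m, itSum (fun b => if h : b - 1 < m then u ⟨b - 1, h⟩ else 0) s ≤ 0}
    with hCdef
  have H : ∀ κ : ℕ → ℕ, (∀ b b', 1 ≤ b → b ≤ m → 1 ≤ b' → b' ≤ m → κ b = κ b' → b = b') →
      ℙ {ω | ∀ s ∈ Finset.Icc 1 m, itSum (fun b => X (κ b) ω) s ≤ 0}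
        = Measure.pi (fun _ : Fin m => Measure.map (X 1) ℙ) C := by
    intro κ hκ
    have hκ'inj : Function.Injective (fun i : Fin m => κ (i.val + 1)) := by
      intro i i' h
      have hi := i.isLt
      have hi' := i'.isLt
      have := hκ (i.val + 1) (i'.val + 1) (by omega) (by omega) (by omega) (by omega) h
      exact Fin.ext (by omega)
    have hΦ : Measurable (fun ω (i : Fin m) => X (κ (i.val + 1)) ω) :=
      measurable_pi_lambda _ fun i => hmeas _
    have hCm : MeasurableSet C := by
      have : C = ⋂ s ∈ (Finset.Icc 1 m : Finset ℕ),
          {u : Fin m → ℝ | itSum (fun b => if h : b - 1 < m then u ⟨b - 1, h⟩ else 0) s ≤ 0} := by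
        ext u; simp [hCdef, Set.mem_iInter]
      rw [this]
      refine Set.Finite.measurableSet_biInter (Finset.finite_toSet _) fun s _ => ?_
      refine measurableSet_le ?_ measurable_const
      refine Finset.measurable_sum _ fun b _ => ?_
      by_cases h : b + 1 - 1 < m
      · simp only [h, dif_pos]
        exact ((measurable_pi_apply _).const_mul _)
      · simp only [h, dif_neg, not_false_iff]
        exact measurable_const.const_mul _
    have hpre : {ω | ∀ s ∈ Finset.Icc 1 m, itSum (fun b => X (κ b) ω) s ≤ 0}
        = (fun ω (i : Fin m) => X (κ (i.val + 1)) ω) ⁻¹' C := by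
      ext ω
      simp only [Set.mem_setOf_eq, Set.mem_preimage, hCdef]
      refine forall₂_congr fun s hs => ?_
      have hs' := (Finset.mem_Icc.mp hs).2
      rw [itSum_congr (w := fun b => X (κ b) ω)
        (v := fun b => if h : b - 1 < m then X (κ (((⟨b - 1, h⟩ : Fin m)).val + 1)) ω else 0)]
      intro b hb1 hbs
      have h : b - 1 < m := by omega
      simp only [h, dif_pos]
      congr 2
      omega
    rw [hpre, ← Measure.map_apply hΦ hCm,
      indep_map_pi X hmeas hindep m (fun i : Fin m => κ (i.val + 1)) hκ'inj]
    have hfac : (fun i : Fin m => Measure.map (X (κ (i.val + 1))) ℙ)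
        = fun _ : Fin m => Measure.map (X 1) ℙ := funext fun i => (hid _).map_eq
    rw [hfac]
  rw [H κ hinj, ← H id (fun b b' _ _ _ _ h => h)]
  rfl


lemma measurable_itSum {Ω : Type*} [MeasurableSpace Ω] (g : ℕ → Ω → ℝ)
    (hg : ∀ i, Measurable (g i)) (s : ℕ) :
    Measurable fun ω => itSum (fun b => g b ω) s := by
  unfold itSum
  exact Finset.measurable_sum _ fun b _ => (hg _).const_mul _


lemma measurable_block_set (T : Finset ℕ) (m : ℕ) (κ : ℕ → ℕ) :
    MeasurableSet {u : {x // x ∈ T} → ℝ | ∀ s ∈ Finset.Icc 1 m,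
      itSum (fun b => if h : κ b ∈ T then u ⟨κ b, h⟩ else 0) s ≤ 0} := by
  have : {u : {x // x ∈ T} → ℝ | ∀ s ∈ Finset.Icc 1 m,
      itSum (fun b => if h : κ b ∈ T then u ⟨κ b, h⟩ else 0) s ≤ 0}
      = ⋂ s ∈ (Finset.Icc 1 m : Finset ℕ), {u : {x // x ∈ T} → ℝ |
          itSum (fun b => if h : κ b ∈ T then u ⟨κ b, h⟩ else 0) s ≤ 0} := by
    ext u; simp [Set.mem_iInter]
  rw [this]
  refine Set.Finite.measurableSet_biInter (Finset.finite_toSet _) fun s _ => ?_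
  refine measurableSet_le (measurable_itSum (fun b (u : {x // x ∈ T} → ℝ) => if h : κ b ∈ T then u ⟨κ b, h⟩ else 0)
    (fun b => ?_) s) measurable_const
  by_cases h : κ b ∈ T
  · simp only [h, dif_pos]; exact measurable_pi_apply _
  · simp only [h, dif_neg, not_false_iff]; exact measurable_const

lemma indicator_block_eq {Ω : Type*} [MeasurableSpace Ω] (X : ℕ → Ω → ℝ) (T : Finset ℕ)
    (m : ℕ) (κ : ℕ → ℕ) (hκT : ∀ b, 1 ≤ b → b ≤ m → κ b ∈ T) (ω : Ω) :
    ({ω' : Ω | ∀ s ∈ Finset.Icc 1 m, itSum (fun b => X (κ b) ω') s ≤ 0}).indicator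
      (fun _ => (1 : ℝ)) ω
    = ({u : {x // x ∈ T} → ℝ | ∀ s ∈ Finset.Icc 1 m,
        itSum (fun b => if h : κ b ∈ T then u ⟨κ b, h⟩ else 0) s ≤ 0}).indicator
        (fun _ => (1 : ℝ)) (fun i => X i.1 ω) := by
  have hsum : ∀ s, s ≤ m → itSum (fun b => if h : κ b ∈ T
        then (fun i : {x // x ∈ T} => X i.1 ω) ⟨κ b, h⟩ else 0) s
      = itSum (fun b => X (κ b) ω) s := by
    intro s hs
    refine itSum_congr fun b hb1 hbs => ?_
    have h : κ b ∈ T := hκT b hb1 (le_trans hbs hs)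
    simp only [h, dif_pos]
  have hmem : ω ∈ {ω' : Ω | ∀ s ∈ Finset.Icc 1 m, itSum (fun b => X (κ b) ω') s ≤ 0}
      ↔ (fun i : {x // x ∈ T} => X i.1 ω) ∈ {u : {x // x ∈ T} → ℝ | ∀ s ∈ Finset.Icc 1 m,
        itSum (fun b => if h : κ b ∈ T then u ⟨κ b, h⟩ else 0) s ≤ 0} := by
    simp only [Set.mem_setOf_eq]
    refine forall₂_congr fun s hs => ?_
    rw [hsum s (Finset.mem_Icc.mp hs).2]
  by_cases h : ω ∈ {ω' : Ω | ∀ s ∈ Finset.Icc 1 m, itSum (fun b => X (κ b) ω') s ≤ 0}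
  · rw [Set.indicator_of_mem h, Set.indicator_of_mem (hmem.mp h)]
  · rw [Set.indicator_of_notMem h, Set.indicator_of_notMem (fun hc => h (hmem.mpr hc))]

/-- For i.i.d. mean-zero variables with `E|X_1| = 1`, and `p_k, q_k` the
strict/weak persistence probabilities of the iterated partial sums `S^{(2)}`, for `n > 2`
one has `∑_{k=0}^{n-2} p_k q_{n-2-k} ≤ 2 E[A_{n-1} - B_{n-1}]`, where
`A_m = max_{1≤k≤m}(-S_{k+1})` and `B_m = -max_{1≤k≤m} S_k`. -/
theorem iterated_persistence_unhooking_upper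
    {Ω : Type*} [MeasureSpace Ω] [IsProbabilityMeasure (ℙ : Measure Ω)]
    (n : ℕ) (hn : 2 < n)
    (X : ℕ → Ω → ℝ) (hmeas : ∀ i, Measurable (X i))
    (hindep : iIndepFun X ℙ)
    (hid : ∀ i, IdentDistrib (X i) (X 1) ℙ ℙ)
    (hint : Integrable (X 1) ℙ)
    (hmean : ∫ ω, X 1 ω = 0)
    (habs : ∫ ω, |X 1 ω| = 1)
    (S : ℕ → Ω → ℝ) (hS : ∀ k ω, S k ω = ∑ i ∈ Finset.Icc 1 k, X i ω)
    (S2 : ℕ → Ω → ℝ) (hS2 : ∀ k ω, S2 k ω = ∑ j ∈ Finset.Icc 1 k, S j ω)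
    (p q : ℕ → ℝ)
    (hp : ∀ k, p k = (ℙ {ω | ∀ j ∈ Finset.Icc 1 k, S2 j ω < 0}).toReal)
    (hq : ∀ k, q k = (ℙ {ω | ∀ j ∈ Finset.Icc 1 k, S2 j ω ≤ 0}).toReal)
    (hne : (Finset.Icc 1 (n - 1)).Nonempty)
    (A B : Ω → ℝ)
    (hA : ∀ ω, A ω = (Finset.Icc 1 (n - 1)).sup' hne (fun k => -S (k + 1) ω))
    (hB : ∀ ω, B ω = -(Finset.Icc 1 (n - 1)).sup' hne (fun k => S k ω)) :
    ∑ k ∈ Finset.range (n - 1), p k * q (n - 2 - k) ≤ 2 * ∫ ω, (A ω - B ω) := by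
  classical
  -- basic recurrences
  have hSrec : ∀ k ω, S (k + 1) ω = S k ω + X (k + 1) ω := by
    intro k ω; rw [hS, hS, Finset.sum_Icc_succ_top (by omega)]
  have hS2rec : ∀ k ω, S2 (k + 1) ω = S2 k ω + S (k + 1) ω := by
    intro k ω; rw [hS2, hS2, Finset.sum_Icc_succ_top (by omega)]
  have hS0 : ∀ ω, S 0 ω = 0 := by intro ω; rw [hS]; simp
  have hS20 : ∀ ω, S2 0 ω = 0 := by intro ω; rw [hS2]; simp
  have hSmeas : ∀ k, Measurable (S k) := by
    intro k
    have : S k = fun ω => ∑ i ∈ Finset.Icc 1 k, X i ω := funext fun ω => hS k ω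
    rw [this]; exact Finset.measurable_sum _ fun i _ => hmeas i
  have hXint : ∀ i, Integrable (X i) ℙ := fun i => (hid i).integrable_iff.mpr hint
  have hSint : ∀ k, Integrable (S k) ℙ := by
    intro k
    have : S k = fun ω => ∑ i ∈ Finset.Icc 1 k, X i ω := funext fun ω => hS k ω
    rw [this]; exact integrable_finset_sum _ fun i _ => hXint i
  -- increment identities
  have hC3 : ∀ j r ω, S (j + r) ω = S j ω + ∑ b ∈ Finset.range r, X (j + 1 + b) ω := by
    intro j r ω
    induction r with
    | zero => simp
    | succ r IH =>
      rw [show j + (r + 1) = (j + r) + 1 from rfl, hSrec, IH, Finset.sum_range_succ]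
      have : X (j + r + 1) ω = X (j + 1 + r) ω := by congr 1; omega
      rw [this]; ring
  have hC5 : ∀ j r ω, r ≤ j → S j ω = S (j - r) ω + ∑ b ∈ Finset.range r, X (j - b) ω := by
    intro j r ω
    induction r with
    | zero => simp
    | succ r IH =>
      intro hr
      have h1 := IH (by omega)
      have h2 : S (j - r) ω = S (j - (r + 1)) ω + X (j - r) ω := by
        have := hSrec (j - (r + 1)) ω
        rw [show j - (r + 1) + 1 = j - r by omega] at this
        exact this
      rw [h1, h2, Finset.sum_range_succ]
      ring
  have hC0 : ∀ s ω, S2 s ω = itSum (fun b => X b ω) s := by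
    intro s ω
    induction s with
    | zero => rw [hS20]; simp [itSum]
    | succ s IH =>
      rw [hS2rec, IH, itSum_succ]
      have : S (s + 1) ω = ∑ b ∈ Finset.range (s + 1), X (b + 1) ω := by
        have := hC3 0 (s + 1) ω
        rw [Nat.zero_add] at this
        rw [this, hS0]
        rw [zero_add]
        exact Finset.sum_congr rfl fun b _ => by congr 1; omega
      rw [this]
  have hC2 : ∀ j s ω, itSum (fun b => X (j + 1 + b) ω) s
      = S2 (j + 1 + s) ω - S2 (j + 1) ω - (s : ℝ) * S (j + 1) ω := by
    intro j s ω
    induction s with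
    | zero => simp [itSum]
    | succ s IH =>
      rw [itSum_succ, IH, show j + 1 + (s + 1) = (j + 1 + s) + 1 from rfl]
      have h1 : S2 (j + 1 + s + 1) ω = S2 (j + 1 + s) ω + S (j + 1 + s + 1) ω :=
        hS2rec (j + 1 + s) ω
      have h2 : S (j + 1 + s + 1) ω
          = S (j + 1) ω + ∑ b ∈ Finset.range (s + 1), X (j + 1 + (b + 1)) ω := by
        have := hC3 (j + 1) (s + 1) ω
        rw [show j + 1 + (s + 1) = j + 1 + s + 1 from rfl] at this
        rw [this]
        congr 1
        exact Finset.sum_congr rfl fun b _ => by congr 1; omega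
      rw [h1, h2]
      push_cast
      ring
  have hC1 : ∀ j s ω, s + 1 ≤ j → itSum (fun b => X (j + 1 - b) ω) s
      = ((s : ℝ) + 1) * S j ω - S2 j ω + S2 (j - 1 - s) ω := by
    intro j s ω
    induction s with
    | zero =>
      intro hj
      have := hS2rec (j - 1) ω
      rw [show j - 1 + 1 = j by omega] at this
      simp [itSum]
      linarith
    | succ s IH =>
      intro hj
      rw [itSum_succ, IH (by omega)]
      have h2 : S2 (j - 1 - s) ω = S2 (j - 1 - (s + 1)) ω + S (j - 1 - s) ω := by
        have := hS2rec (j - 1 - (s + 1)) ω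
        rw [show j - 1 - (s + 1) + 1 = j - 1 - s by omega] at this
        exact this
      have h3 : S j ω = S (j - 1 - s) ω + ∑ b ∈ Finset.range (s + 1), X (j - b) ω := by
        have := hC5 j (s + 1) ω (by omega)
        rw [show j - (s + 1) = j - 1 - s by omega] at this
        exact this
      have h4 : ∑ b ∈ Finset.range (s + 1), X (j + 1 - (b + 1)) ω
          = ∑ b ∈ Finset.range (s + 1), X (j - b) ω :=
        Finset.sum_congr rfl fun b _ => by congr 1; omega
      rw [h4]
      push_cast
      linarith [h2, h3]

  -- the events and the lower-bound functions
  have hn1 : 1 ≤ n - 1 := by omega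
  set Xm : ℕ → Ω → ℝ := fun j ω => max 0 (-(X (j + 1) ω)) with hXmdef
  set Eb : ℕ → Set Ω := fun j =>
    {ω | ∀ s ∈ Finset.Icc 1 (j - 1), itSum (fun b => X (j + 1 - b) ω) s ≤ 0} with hEbdef
  set Ef : ℕ → Set Ω := fun j =>
    {ω | ∀ s ∈ Finset.Icc 1 (n - 1 - j), itSum (fun b => X (j + 1 + b) ω) s ≤ 0} with hEfdef
  set L : ℕ → Ω → ℝ := fun j ω =>
    (Eb j).indicator (fun _ => (1 : ℝ)) ω * Xm j ω * (Ef j).indicator (fun _ => (1 : ℝ)) ω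
    with hLdef
  have hEbm : ∀ j, MeasurableSet (Eb j) := by
    intro j
    have : Eb j = ⋂ s ∈ (Finset.Icc 1 (j - 1) : Finset ℕ),
        {ω | itSum (fun b => X (j + 1 - b) ω) s ≤ 0} := by
      ext ω; simp [hEbdef, Set.mem_iInter]
    rw [this]
    refine Set.Finite.measurableSet_biInter (Finset.finite_toSet _) fun s _ => ?_
    exact measurableSet_le (measurable_itSum _ (fun i => hmeas _) s) measurable_const
  have hEfm : ∀ j, MeasurableSet (Ef j) := by
    intro j
    have : Ef j = ⋂ s ∈ (Finset.Icc 1 (n - 1 - j) : Finset ℕ),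
        {ω | itSum (fun b => X (j + 1 + b) ω) s ≤ 0} := by
      ext ω; simp [hEfdef, Set.mem_iInter]
    rw [this]
    refine Set.Finite.measurableSet_biInter (Finset.finite_toSet _) fun s _ => ?_
    exact measurableSet_le (measurable_itSum _ (fun i => hmeas _) s) measurable_const
  have hXmmeas : ∀ j, Measurable (Xm j) := fun j => measurable_const.max (hmeas _).neg
  have hXm0 : ∀ j ω, 0 ≤ Xm j ω := fun j ω => le_max_left _ _
  have hLmeas : ∀ j, Measurable (L j) := fun j =>
    ((measurable_const.indicator (hEbm j)).mul (hXmmeas j)).mul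
      (measurable_const.indicator (hEfm j))
  have hind01 : ∀ (E : Set Ω) (ω : Ω), E.indicator (fun _ => (1 : ℝ)) ω = 0 ∨
      E.indicator (fun _ => (1 : ℝ)) ω = 1 := by
    intro E ω; by_cases h : ω ∈ E <;> simp [h]
  have hindnn : ∀ (E : Set Ω) (ω : Ω), 0 ≤ E.indicator (fun _ => (1 : ℝ)) ω :=
    fun E ω => Set.indicator_nonneg (fun _ _ => zero_le_one) ω
  have hL0 : ∀ j ω, 0 ≤ L j ω := by
    intro j ω
    exact mul_nonneg (mul_nonneg (hindnn _ _) (hXm0 j ω)) (hindnn _ _)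
  have hLle : ∀ j ω, L j ω ≤ |X (j + 1) ω| := by
    intro j ω
    have hXm : Xm j ω ≤ |X (j + 1) ω| := max_le (abs_nonneg _) (neg_le_abs _)
    rcases hind01 (Eb j) ω with h1 | h1 <;> rcases hind01 (Ef j) ω with h2 | h2 <;>
      simp only [hLdef, h1, h2, mul_zero, zero_mul, mul_one, one_mul] <;>
      first
        | exact abs_nonneg _
        | exact hXm
  have hLval : ∀ j ω, L j ω ≠ 0 →
      ω ∈ Eb j ∧ ω ∈ Ef j ∧ X (j + 1) ω ≤ 0 ∧ L j ω = -(X (j + 1) ω) := by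
    intro j ω hL
    by_cases hb : ω ∈ Eb j
    · by_cases hf : ω ∈ Ef j
      · have hLeq : L j ω = Xm j ω := by
          simp [hLdef, Set.indicator_of_mem hb, Set.indicator_of_mem hf]
        rcases le_or_gt (-(X (j + 1) ω)) 0 with hx | hx
        · exfalso; apply hL; rw [hLeq, hXmdef]; simp [max_eq_left hx]
        · exact ⟨hb, hf, by linarith, by rw [hLeq, hXmdef]; simp [max_eq_right hx.le]⟩
      · exfalso; apply hL; simp [hLdef, Set.indicator_of_notMem hf]
    · exfalso; apply hL; simp [hLdef, Set.indicator_of_notMem hb]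
  -- pointwise inequality
  have hpoint : ∀ ω, ∑ j ∈ Finset.Icc 1 (n - 1), L j ω ≤ A ω - B ω := by
    intro ω
    have hfwd : ∀ j j', j < j' → j' ≤ n - 1 → ω ∈ Ef j → X (j + 1) ω ≤ 0 →
        S2 j' ω - S2 j ω ≤ ((j' : ℝ) - (j : ℝ)) * (S j ω + X (j + 1) ω) := by
      intro j j' hlt hj' hEfω hXneg
      have hr1 := hS2rec j ω
      have hr2 := hSrec j ω
      rcases eq_or_lt_of_le (Nat.succ_le_of_lt hlt) with heq | hlt2
      · rw [← heq]
        have hc : ((j + 1 : ℕ) : ℝ) - (j : ℝ) = 1 := by push_cast; ring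
        rw [hc, one_mul, hr1, ← hr2]
        linarith
      · set s := j' - j - 1 with hsdef
        have hE := hEfω s (Finset.mem_Icc.mpr ⟨by omega, by omega⟩)
        rw [hC2 j s ω, show j + 1 + s = j' by omega] at hE
        have hc : ((j' : ℕ) : ℝ) - (j : ℝ) = (s : ℝ) + 1 := by
          rw [show j' = j + s + 1 by omega]; push_cast; ring
        rw [hc, ← hr2]
        have hexp : ((s : ℝ) + 1) * S (j + 1) ω = (s : ℝ) * S (j + 1) ω + S (j + 1) ω := by
          ring
        rw [hexp]
        linarith
    have hbwd : ∀ j j', 1 ≤ j → j < j' → ω ∈ Eb j' →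
        ((j' : ℝ) - (j : ℝ)) * S j' ω ≤ S2 j' ω - S2 j ω := by
      intro j j' hj1 hlt hEbω
      rcases eq_or_lt_of_le (Nat.succ_le_of_lt hlt) with heq | hlt2
      · rw [← heq]
        have hc : ((j + 1 : ℕ) : ℝ) - (j : ℝ) = 1 := by push_cast; ring
        rw [hc, one_mul, hS2rec j ω]
        linarith
      · set s := j' - 1 - j with hsdef
        have hE := hEbω s (Finset.mem_Icc.mpr ⟨by omega, by omega⟩)
        rw [hC1 j' s ω (by omega), show j' - 1 - s = j by omega] at hE
        have hc : ((j' : ℕ) : ℝ) - (j : ℝ) = (s : ℝ) + 1 := by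
          rw [show j' = j + s + 1 by omega]; push_cast; ring
        rw [hc]
        linarith
    refine aux_chain (A ω) (fun j => L j ω) (fun j => -(S j ω)) (Finset.Icc 1 (n - 1)) (B ω)
      (fun j _ => hL0 j ω) ?_ ?_ ?_ ?_
    · intro j hj j' hj' hlt hLj hLj'
      obtain ⟨-, hfj, hxj, hLjeq⟩ := hLval j ω hLj
      obtain ⟨hbj', -, -, -⟩ := hLval j' ω hLj'
      have hjm := Finset.mem_Icc.mp hj
      have hjm' := Finset.mem_Icc.mp hj'
      have h1 := hfwd j j' hlt hjm'.2 hfj hxj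
      have h2 := hbwd j j' hjm.1 hlt hbj'
      have hpos : (0 : ℝ) < (j' : ℝ) - (j : ℝ) := by
        have : (j : ℝ) < (j' : ℝ) := by exact_mod_cast hlt
        linarith
      have h3 : S j' ω ≤ S j ω + X (j + 1) ω := by
        have := h2.trans h1
        exact le_of_mul_le_mul_left (by linarith [this]) hpos
      rw [hLjeq]
      linarith
    · intro j hj _
      rw [hB]
      have := Finset.le_sup' (fun k => S k ω) hj
      linarith
    · intro j hj hLj
      obtain ⟨-, -, -, hLeq⟩ := hLval j ω hLj
      rw [hLeq, hA]
      have := Finset.le_sup' (fun k => -S (k + 1) ω) hj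
      have hr := hSrec j ω
      linarith
    · have h1 : -(S 2 ω) ≤ A ω := by
        rw [hA]
        have := Finset.le_sup' (fun k => -S (k + 1) ω)
          (Finset.mem_Icc.mpr ⟨le_refl 1, hn1⟩)
        exact this
      have h2 : B ω ≤ -(S 2 ω) := by
        rw [hB]
        have := Finset.le_sup' (fun k => S k ω)
          (Finset.mem_Icc.mpr (⟨by omega, by omega⟩ : 1 ≤ 2 ∧ 2 ≤ n - 1))
        linarith
      linarith

  -- measurability and integrability of A, B
  have hAmeas : Measurable A := by
    have : A = fun ω => (Finset.Icc 1 (n - 1)).sup' hne (fun k => -S (k + 1) ω) := funext hA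
    rw [this]
    exact measurable_finset_sup' hne fun k => (hSmeas (k + 1)).neg
  have hBmeas : Measurable B := by
    have : B = fun ω => -(Finset.Icc 1 (n - 1)).sup' hne (fun k => S k ω) := funext hB
    rw [this]
    exact (measurable_finset_sup' hne fun k => hSmeas k).neg
  set D : Ω → ℝ := fun ω => ∑ k ∈ Finset.Icc 1 (n - 1), (|S (k + 1) ω| + |S k ω|) with hDdef
  have hDint : Integrable D ℙ :=
    integrable_finset_sum _ fun k _ => (hSint (k + 1)).abs.add (hSint k).abs
  have hDterm : ∀ ω k, k ∈ Finset.Icc 1 (n - 1) → |S (k + 1) ω| + |S k ω| ≤ D ω := by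
    intro ω k hk
    exact Finset.single_le_sum (f := fun k => |S (k + 1) ω| + |S k ω|)
      (fun i _ => by positivity) hk
  have hm1 : (1 : ℕ) ∈ Finset.Icc 1 (n - 1) := Finset.mem_Icc.mpr ⟨le_refl 1, hn1⟩
  have hABbound : ∀ ω, |A ω - B ω| ≤ 2 * D ω := by
    intro ω
    have h1 : A ω ≤ D ω := by
      rw [hA]
      refine Finset.sup'_le hne _ fun k hk => ?_
      have h := hDterm ω k hk
      have := abs_nonneg (S k ω)
      have := neg_le_abs (S (k + 1) ω)
      linarith
    have h2 : -(D ω) ≤ A ω := by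
      rw [hA]
      have h := Finset.le_sup' (fun k => -S (k + 1) ω) hm1
      have h' := hDterm ω 1 hm1
      have := le_abs_self (S (1 + 1) ω)
      have := abs_nonneg (S 1 ω)
      linarith
    have h3 : B ω ≤ D ω := by
      rw [hB]
      have h := Finset.le_sup' (fun k => S k ω) hm1
      have h' := hDterm ω 1 hm1
      have := neg_le_abs (S 1 ω)
      have := abs_nonneg (S (1 + 1) ω)
      linarith
    have h4 : -(D ω) ≤ B ω := by
      rw [hB]
      have h : (Finset.Icc 1 (n - 1)).sup' hne (fun k => S k ω) ≤ D ω := by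
        refine Finset.sup'_le hne _ fun k hk => ?_
        have h := hDterm ω k hk
        have := le_abs_self (S k ω)
        have := abs_nonneg (S (k + 1) ω)
        linarith
      linarith
    rw [abs_le]
    constructor <;> linarith
  have hABint : Integrable (fun ω => A ω - B ω) ℙ := by
    refine Integrable.mono' (hDint.const_mul 2) ((hAmeas.sub hBmeas).aestronglyMeasurable) ?_
    exact Filter.Eventually.of_forall fun ω => by
      rw [Real.norm_eq_abs]; exact hABbound ω
  have hLint : ∀ j, Integrable (L j) ℙ := by
    intro j
    refine Integrable.mono' (hXint (j + 1)).abs (hLmeas j).aestronglyMeasurable ?_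
    exact Filter.Eventually.of_forall fun ω => by
      rw [Real.norm_eq_abs, abs_of_nonneg (hL0 j ω)]; exact hLle j ω
  -- basic facts about p and q
  have hq0 : ∀ k, 0 ≤ q k := fun k => by rw [hq]; exact ENNReal.toReal_nonneg
  have hpq : ∀ k, p k ≤ q k := by
    intro k
    rw [hp, hq]
    refine ENNReal.toReal_mono (measure_ne_top _ _) (measure_mono ?_)
    intro ω hω j hj
    exact le_of_lt (hω j hj)
  -- the key identity for each j
  have key : ∀ j ∈ Finset.Icc 1 (n - 1), q (j - 1) * q (n - 1 - j) = 2 * ∫ ω, L j ω := by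
    intro j hj
    obtain ⟨hj1, hj2⟩ := Finset.mem_Icc.mp hj
    have hqEb : (ℙ (Eb j)).toReal = q (j - 1) := by
      have h1 := lawQ X hmeas hindep hid (j - 1) (fun b => j + 1 - b)
        (fun b b' hb1 hb2 hb3 hb4 h5 => by omega)
      have h2 : {ω | ∀ s ∈ Finset.Icc 1 (j - 1), itSum (fun b => X b ω) s ≤ 0}
          = {ω | ∀ s ∈ Finset.Icc 1 (j - 1), S2 s ω ≤ 0} := by
        ext ω
        refine forall₂_congr fun s hs => ?_
        rw [hC0 s ω]
      have h0 : Eb j = {ω | ∀ s ∈ Finset.Icc 1 (j - 1),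
          itSum (fun b => X ((fun b => j + 1 - b) b) ω) s ≤ 0} := rfl
      rw [h0, h1, h2, ← hq]
    have hqEf : (ℙ (Ef j)).toReal = q (n - 1 - j) := by
      have h1 := lawQ X hmeas hindep hid (n - 1 - j) (fun b => j + 1 + b)
        (fun b b' hb1 hb2 hb3 hb4 h5 => by omega)
      have h2 : {ω | ∀ s ∈ Finset.Icc 1 (n - 1 - j), itSum (fun b => X b ω) s ≤ 0}
          = {ω | ∀ s ∈ Finset.Icc 1 (n - 1 - j), S2 s ω ≤ 0} := by
        ext ω
        refine forall₂_congr fun s hs => ?_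
        rw [hC0 s ω]
      have h0 : Ef j = {ω | ∀ s ∈ Finset.Icc 1 (n - 1 - j),
          itSum (fun b => X ((fun b => j + 1 + b) b) ω) s ≤ 0} := rfl
      rw [h0, h1, h2, ← hq]
    -- block structure
    have hdisj1 : Disjoint (Finset.Icc 2 j) (Finset.Icc (j + 1) n) := by
      rw [Finset.disjoint_left]
      intro a ha hb
      have h1 := Finset.mem_Icc.mp ha
      have h2 := Finset.mem_Icc.mp hb
      omega
    have hdisj2 : Disjoint ({j + 1} : Finset ℕ) (Finset.Icc (j + 2) n) := by
      rw [Finset.disjoint_left]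
      intro a ha hb
      have h1 := Finset.mem_singleton.mp ha
      have h2 := Finset.mem_Icc.mp hb
      omega
    -- the composed functions
    set C1 : Set ({x // x ∈ Finset.Icc 2 j} → ℝ) :=
      {u | ∀ s ∈ Finset.Icc 1 (j - 1),
        itSum (fun b => if h : j + 1 - b ∈ Finset.Icc 2 j then u ⟨j + 1 - b, h⟩ else 0) s ≤ 0}
      with hC1def
    set C2f : Set ({x // x ∈ Finset.Icc (j + 1) n} → ℝ) :=
      {u | ∀ s ∈ Finset.Icc 1 (n - 1 - j),
        itSum (fun b => if h : j + 1 + b ∈ Finset.Icc (j + 1) n then u ⟨j + 1 + b, h⟩ else 0)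
          s ≤ 0} with hC2fdef
    set C4 : Set ({x // x ∈ Finset.Icc (j + 2) n} → ℝ) :=
      {u | ∀ s ∈ Finset.Icc 1 (n - 1 - j),
        itSum (fun b => if h : j + 1 + b ∈ Finset.Icc (j + 2) n then u ⟨j + 1 + b, h⟩ else 0)
          s ≤ 0} with hC4def
    have hjn : j + 1 ≤ n := by omega
    have hmemT2 : j + 1 ∈ Finset.Icc (j + 1) n := Finset.mem_Icc.mpr ⟨le_refl _, hjn⟩
    have hmemT3 : j + 1 ∈ ({j + 1} : Finset ℕ) := Finset.mem_singleton_self _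
    have hκ1 : ∀ b, 1 ≤ b → b ≤ j - 1 → j + 1 - b ∈ Finset.Icc 2 j := by
      intro b hb1 hb2; exact Finset.mem_Icc.mpr ⟨by omega, by omega⟩
    have hκ2 : ∀ b, 1 ≤ b → b ≤ n - 1 - j → j + 1 + b ∈ Finset.Icc (j + 1) n := by
      intro b hb1 hb2; exact Finset.mem_Icc.mpr ⟨by omega, by omega⟩
    have hκ4 : ∀ b, 1 ≤ b → b ≤ n - 1 - j → j + 1 + b ∈ Finset.Icc (j + 2) n := by
      intro b hb1 hb2; exact Finset.mem_Icc.mpr ⟨by omega, by omega⟩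
    -- independence step 1
    have hcomp1 : (fun ω => (Eb j).indicator (fun _ => (1 : ℝ)) ω)
        = fun ω => C1.indicator (fun _ => (1 : ℝ))
            (fun i : {x // x ∈ Finset.Icc 2 j} => X i.1 ω) :=
      funext fun ω => indicator_block_eq X (Finset.Icc 2 j) (j - 1) (fun b => j + 1 - b) hκ1 ω
    have hcomp2 : (fun ω => Xm j ω * (Ef j).indicator (fun _ => (1 : ℝ)) ω)
        = fun ω => (max 0 (-(if h : j + 1 ∈ Finset.Icc (j + 1) n
              then (fun i : {x // x ∈ Finset.Icc (j + 1) n} => X i.1 ω) ⟨j + 1, h⟩ else 0)))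
            * C2f.indicator (fun _ => (1 : ℝ))
              (fun i : {x // x ∈ Finset.Icc (j + 1) n} => X i.1 ω) := by
      funext ω
      rw [← indicator_block_eq X (Finset.Icc (j + 1) n) (n - 1 - j) (fun b => j + 1 + b) hκ2 ω]
      simp only [hmemT2, dif_pos, hXmdef]
      rfl
    have hF1meas : Measurable (fun u : {x // x ∈ Finset.Icc 2 j} → ℝ =>
        C1.indicator (fun _ => (1 : ℝ)) u) :=
      measurable_const.indicator (measurable_block_set _ _ _)
    have hF2meas : Measurable (fun u : {x // x ∈ Finset.Icc (j + 1) n} → ℝ =>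
        (max 0 (-(if h : j + 1 ∈ Finset.Icc (j + 1) n then u ⟨j + 1, h⟩ else 0)))
          * C2f.indicator (fun _ => (1 : ℝ)) u) := by
      refine Measurable.mul ?_ (measurable_const.indicator (measurable_block_set _ _ _))
      simp only [hmemT2, dif_pos]
      exact measurable_const.max (measurable_pi_apply _).neg
    have hI1 : IndepFun (fun ω => (Eb j).indicator (fun _ => (1 : ℝ)) ω)
        (fun ω => Xm j ω * (Ef j).indicator (fun _ => (1 : ℝ)) ω) ℙ := by
      have base := hindep.indepFun_finset (Finset.Icc 2 j) (Finset.Icc (j + 1) n) hdisj1 hmeas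
      have hcc := base.comp hF1meas hF2meas
      rw [hcomp1, hcomp2]
      exact hcc
    -- independence step 2
    have hcomp3 : Xm j
        = fun ω => (max 0 (-(if h : j + 1 ∈ ({j + 1} : Finset ℕ)
            then (fun i : {x // x ∈ ({j + 1} : Finset ℕ)} => X i.1 ω) ⟨j + 1, h⟩ else 0))) := by
      funext ω
      simp only [hmemT3, dif_pos, hXmdef]
    have hcomp4 : (fun ω => (Ef j).indicator (fun _ => (1 : ℝ)) ω)
        = fun ω => C4.indicator (fun _ => (1 : ℝ))
            (fun i : {x // x ∈ Finset.Icc (j + 2) n} => X i.1 ω) :=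
      funext fun ω => indicator_block_eq X (Finset.Icc (j + 2) n) (n - 1 - j)
        (fun b => j + 1 + b) hκ4 ω
    have hF3meas : Measurable (fun u : {x // x ∈ ({j + 1} : Finset ℕ)} → ℝ =>
        max 0 (-(if h : j + 1 ∈ ({j + 1} : Finset ℕ) then u ⟨j + 1, h⟩ else 0))) := by
      simp only [hmemT3, dif_pos]
      exact measurable_const.max (measurable_pi_apply _).neg
    have hF4meas : Measurable (fun u : {x // x ∈ Finset.Icc (j + 2) n} → ℝ =>
        C4.indicator (fun _ => (1 : ℝ)) u) :=
      measurable_const.indicator (measurable_block_set _ _ _)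
    have hI2 : IndepFun (Xm j) (fun ω => (Ef j).indicator (fun _ => (1 : ℝ)) ω) ℙ := by
      have base := hindep.indepFun_finset ({j + 1} : Finset ℕ) (Finset.Icc (j + 2) n)
        hdisj2 hmeas
      have hcc := base.comp hF3meas hF4meas
      rw [hcomp3, hcomp4]
      exact hcc
    -- integrals
    have hIndEbInt : Integrable ((Eb j).indicator (fun _ => (1 : ℝ))) ℙ :=
      (integrable_const (1 : ℝ)).indicator (hEbm j)
    have hIndEfInt : Integrable ((Ef j).indicator (fun _ => (1 : ℝ))) ℙ :=
      (integrable_const (1 : ℝ)).indicator (hEfm j)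
    have hXmInt : Integrable (Xm j) ℙ := by
      refine Integrable.mono' (hXint (j + 1)).abs (hXmmeas j).aestronglyMeasurable ?_
      refine Filter.Eventually.of_forall fun ω => ?_
      rw [Real.norm_eq_abs, abs_of_nonneg (hXm0 j ω)]
      exact max_le (abs_nonneg _) (neg_le_abs _)
    have hXmIndInt : Integrable (fun ω => Xm j ω * (Ef j).indicator (fun _ => (1 : ℝ)) ω) ℙ := by
      refine Integrable.mono' (hXint (j + 1)).abs
        ((hXmmeas j).mul (measurable_const.indicator (hEfm j))).aestronglyMeasurable ?_
      refine Filter.Eventually.of_forall fun ω => ?_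
      rw [Real.norm_eq_abs]
      have h1 : 0 ≤ Xm j ω * (Ef j).indicator (fun _ => (1 : ℝ)) ω :=
        mul_nonneg (hXm0 j ω) (hindnn _ _)
      rw [abs_of_nonneg h1]
      have hXmb : Xm j ω ≤ |X (j + 1) ω| := max_le (abs_nonneg _) (neg_le_abs _)
      rcases hind01 (Ef j) ω with h2 | h2 <;> rw [h2]
      · simpa using abs_nonneg (X (j + 1) ω)
      · simpa using hXmb
    have hLsplit : (fun ω => L j ω) = fun ω => (Eb j).indicator (fun _ => (1 : ℝ)) ω
        * (Xm j ω * (Ef j).indicator (fun _ => (1 : ℝ)) ω) := by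
      funext ω
      simp only [hLdef]
      ring
    have e1 : ∫ ω, L j ω = (∫ ω, (Eb j).indicator (fun _ => (1 : ℝ)) ω)
        * ∫ ω, Xm j ω * (Ef j).indicator (fun _ => (1 : ℝ)) ω := by
      rw [hLsplit]
      exact hI1.integral_fun_mul_eq_mul_integral hIndEbInt.aestronglyMeasurable hXmIndInt.aestronglyMeasurable
    have e2 : ∫ ω, Xm j ω * (Ef j).indicator (fun _ => (1 : ℝ)) ω
        = (∫ ω, Xm j ω) * ∫ ω, (Ef j).indicator (fun _ => (1 : ℝ)) ω :=
      hI2.integral_fun_mul_eq_mul_integral hXmInt.aestronglyMeasurable hIndEfInt.aestronglyMeasurable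
    have eb : ∫ ω, (Eb j).indicator (fun _ => (1 : ℝ)) ω = (ℙ (Eb j)).toReal := by
      rw [integral_indicator_const (1 : ℝ) (hEbm j)]
      simp
      rfl
    have ef : ∫ ω, (Ef j).indicator (fun _ => (1 : ℝ)) ω = (ℙ (Ef j)).toReal := by
      rw [integral_indicator_const (1 : ℝ) (hEfm j)]
      simp
      rfl
    have eXm : ∫ ω, Xm j ω = 1 / 2 := by
      have hcomp : IdentDistrib (Xm j) (fun ω => max 0 (-(X 1 ω))) ℙ ℙ :=
        (hid (j + 1)).comp (measurable_const.max measurable_neg)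
      rw [hcomp.integral_eq]
      have hrw : (fun ω => max 0 (-(X 1 ω))) = fun ω => (|X 1 ω| - X 1 ω) / 2 := by
        funext ω
        rcases le_or_gt 0 (X 1 ω) with h | h
        · rw [abs_of_nonneg h, max_eq_left (by linarith)]
          ring
        · rw [abs_of_neg h, max_eq_right (by linarith)]
          ring
      rw [hrw]
      rw [integral_div, integral_sub hint.abs hint]
      rw [habs, hmean]
      norm_num
    rw [e1, e2, eb, ef, eXm, hqEb, hqEf]
    ring
  -- putting everything together
  have hreindex : ∑ k ∈ Finset.range (n - 1), q k * q (n - 2 - k)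
      = ∑ j ∈ Finset.Icc 1 (n - 1), q (j - 1) * q (n - 1 - j) := by
    refine Finset.sum_nbij' (fun k => k + 1) (fun j => j - 1) ?_ ?_ ?_ ?_ ?_ <;>
        intro a ha <;> simp only [Finset.mem_range, Finset.mem_Icc] at ha ⊢
    · omega
    · omega
    · omega
    · omega
    · congr 2 <;> omega
  calc ∑ k ∈ Finset.range (n - 1), p k * q (n - 2 - k)
      ≤ ∑ k ∈ Finset.range (n - 1), q k * q (n - 2 - k) :=
        Finset.sum_le_sum fun k _ => mul_le_mul_of_nonneg_right (hpq k) (hq0 _)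
    _ = ∑ j ∈ Finset.Icc 1 (n - 1), q (j - 1) * q (n - 1 - j) := hreindex
    _ = ∑ j ∈ Finset.Icc 1 (n - 1), 2 * ∫ ω, L j ω := Finset.sum_congr rfl key
    _ = 2 * ∑ j ∈ Finset.Icc 1 (n - 1), ∫ ω, L j ω := by rw [Finset.mul_sum]
    _ = 2 * ∫ ω, ∑ j ∈ Finset.Icc 1 (n - 1), L j ω := by
        rw [integral_finset_sum _ fun j _ => hLint j]
    _ ≤ 2 * ∫ ω, (A ω - B ω) := by
        have hmono := integral_mono (f := fun ω => ∑ j ∈ Finset.Icc 1 (n - 1), L j ω)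
          (integrable_finset_sum _ fun j _ => hLint j) hABint hpoint
        linarith
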